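/- For every integer n and every real number x, the infinite product G_n(x) = ∏_{j ≤ n} ((j−i)/(j+i))·((x−j−i)/(x−j+i)) (i.e. the limit as m → ∞ of the partial products over n−m ≤ j ≤ n) converges and equals (Γ(−i−n)/Γ(i−n)) · (Γ(x−n+i)/Γ(x−n−i)), where Γ is the complex Gamma function and i is the imaginary unit. -/

import Mathlib

open Complex Filter Real

private lemma prod_shift_ne_zero {s : ℂ} (hs : s.im ≠ 0) (m : ℕ) :
    ∏ k ∈ Finset.range (m + 1), (s + (k : ℂ)) ≠ 0 := by
  refine Finset.prod_ne_zero_iff.2 fun k _ h => hs ?_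
  have := congrArg Complex.im h
  simpa using this

theorem product_eq_gamma (n : ℤ) (x : ℝ) :
    Tendsto
      (fun m : ℕ =>
        ∏ j ∈ Finset.Icc (n - m : ℤ) n,
          (((j : ℂ) - I) / ((j : ℂ) + I)) * (((x : ℂ) - (j : ℂ) - I) / ((x : ℂ) - (j : ℂ) + I)))
      atTop
      (nhds ((Complex.Gamma (-I - (n : ℂ)) / Complex.Gamma (I - (n : ℂ))) *
        (Complex.Gamma ((x : ℂ) - (n : ℂ) + I) / Complex.Gamma ((x : ℂ) - (n : ℂ) - I)))) := by
  set a : ℂ := -I - (n : ℂ)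
  set b : ℂ := I - (n : ℂ)
  set c : ℂ := (x : ℂ) - (n : ℂ) + I
  set d : ℂ := (x : ℂ) - (n : ℂ) - I
  have hΓb : Complex.Gamma b ≠ 0 := by
    refine Complex.Gamma_ne_zero fun m h => ?_
    have := congrArg Complex.im h
    simp [b] at this
  have hΓd : Complex.Gamma d ≠ 0 := by
    refine Complex.Gamma_ne_zero fun m h => ?_
    have := congrArg Complex.im h
    simp [d] at this
  have hlim : Tendsto (fun m : ℕ =>
      Complex.GammaSeq a m / Complex.GammaSeq b m *
        (Complex.GammaSeq c m / Complex.GammaSeq d m)) atTop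
      (nhds (Complex.Gamma a / Complex.Gamma b * (Complex.Gamma c / Complex.Gamma d))) :=
    (((Complex.GammaSeq_tendsto_Gamma a).div (Complex.GammaSeq_tendsto_Gamma b) hΓb).mul
      ((Complex.GammaSeq_tendsto_Gamma c).div (Complex.GammaSeq_tendsto_Gamma d) hΓd))
  refine Tendsto.congr' ?_ hlim
  filter_upwards [eventually_ge_atTop 1] with m hm
  have hm0 : (m : ℂ) ≠ 0 := by exact_mod_cast Nat.one_le_iff_ne_zero.mp hm
  have hF : ((Nat.factorial m : ℕ) : ℂ) ≠ 0 := by exact_mod_cast Nat.factorial_ne_zero m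
  have hqa := prod_shift_ne_zero (s := a) (by simp [a]) m
  have hqb := prod_shift_ne_zero (s := b) (by simp [b]) m
  have hqc := prod_shift_ne_zero (s := c) (by simp [c]) m
  have hqd := prod_shift_ne_zero (s := d) (by simp [d]) m
  have hpa : (m : ℂ) ^ a ≠ 0 := by simp [Complex.cpow_eq_zero_iff, hm0]
  have hpb : (m : ℂ) ^ b ≠ 0 := by simp [Complex.cpow_eq_zero_iff, hm0]
  have hpc : (m : ℂ) ^ c ≠ 0 := by simp [Complex.cpow_eq_zero_iff, hm0]
  have hpd : (m : ℂ) ^ d ≠ 0 := by simp [Complex.cpow_eq_zero_iff, hm0]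
  have hpp : (m : ℂ) ^ a * (m : ℂ) ^ c = (m : ℂ) ^ b * (m : ℂ) ^ d := by
    rw [← Complex.cpow_add _ _ hm0, ← Complex.cpow_add _ _ hm0]
    simp only [a, b, c, d]; ring_nf
  -- reindex the product
  have hre : (∏ j ∈ Finset.Icc (n - m : ℤ) n,
      (((j : ℂ) - I) / ((j : ℂ) + I)) * (((x : ℂ) - (j : ℂ) - I) / ((x : ℂ) - (j : ℂ) + I)))
      = ∏ k ∈ Finset.range (m + 1),
        ((b + (k : ℂ)) / (a + (k : ℂ))) * ((d + (k : ℂ)) / (c + (k : ℂ))) := by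
    rw [Finset.prod_bij' (i := fun j _ => (n - j).toNat) (j := fun k _ => n - (k : ℤ))]
    · intro j hj
      simp only [Finset.mem_Icc] at hj
      simp only [Finset.mem_range]
      omega
    · intro k hk
      simp only [Finset.mem_range] at hk
      simp only [Finset.mem_Icc]
      omega
    · intro j hj
      simp only [Finset.mem_Icc] at hj
      omega
    · intro k hk
      simp only [Finset.mem_range] at hk
      omega
    · intro j hj
      simp only [Finset.mem_Icc] at hj
      have h1 : ((n - j).toNat : ℤ) = n - j := by omega
      have hcast : ((((n - j).toNat : ℕ) : ℂ)) = (n : ℂ) - (j : ℂ) := by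
        rw [← Int.cast_natCast, h1]
        push_cast
        ring
      rw [hcast]
      congr 1
      · rw [show (j : ℂ) - I = -(b + ((n:ℂ) - j)) by simp only [b]; ring,
          show (j : ℂ) + I = -(a + ((n:ℂ) - j)) by simp only [a]; ring, neg_div_neg_eq]
      · rw [show (x : ℂ) - j - I = d + ((n:ℂ) - j) by simp only [d]; ring,
          show (x : ℂ) - j + I = c + ((n:ℂ) - j) by simp only [c]; ring]
  rw [hre]
  rw [Finset.prod_mul_distrib, Finset.prod_div_distrib, Finset.prod_div_distrib]
  simp only [Complex.GammaSeq]
  generalize hQa : (∏ k ∈ Finset.range (m + 1), (a + (k : ℂ))) = qa at hqa ⊢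
  generalize hQb : (∏ k ∈ Finset.range (m + 1), (b + (k : ℂ))) = qb at hqb ⊢
  generalize hQc : (∏ k ∈ Finset.range (m + 1), (c + (k : ℂ))) = qc at hqc ⊢
  generalize hQd : (∏ k ∈ Finset.range (m + 1), (d + (k : ℂ))) = qd at hqd ⊢
  generalize hPa : ((m : ℂ) ^ a) = pa at hpa hpp ⊢
  generalize hPb : ((m : ℂ) ^ b) = pb at hpb hpp ⊢
  generalize hPc : ((m : ℂ) ^ c) = pc at hpc hpp ⊢
  generalize hPd : ((m : ℂ) ^ d) = pd at hpd hpp ⊢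
  generalize hFF : ((Nat.factorial m : ℕ) : ℂ) = F at hF ⊢
  field_simp
  linear_combination hpp
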